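/- arXiv:1209.4537 — 4 statements merged into one kernel-verified Lean document; each statement's English description precedes it below -/
import Mathlib

section
/- For the function Ψ(x) = I₁(x)/I₀(x), where I₀(x) = (1/2π)∫₀^{2π} exp(x cos θ) dθ and I₁(x) = (1/2π)∫₀^{2π} cos θ · exp(x cos θ) dθ are modified Bessel functions, the fixed point equation r = Ψ(2Kr) admits a strictly positive solution r > 0 if and only if K > 1. -/
open Real MeasureTheory

/-- Modified Bessel function of the first kind of order `j` (integral formula). -/
noncomputable def besselI (j : ℕ) (x : ℝ) : ℝ :=
  (1 / (2 * π)) * ∫ θ in (0:ℝ)..(2 * π), (Real.cos θ) ^ j * Real.exp (x * Real.cos θ)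

/-- `Ψ(x) = I₁(x)/I₀(x)`. -/
noncomputable def Psi (x : ℝ) : ℝ := besselI 1 x / besselI 0 x

open intervalIntegral


lemma cos_lt_one_on {t : ℝ} (ht : t ∈ Set.Ioo 0 (2*π)) : Real.cos t < 1 := by
  refine lt_of_le_of_ne (Real.cos_le_one t) (fun h => ?_)
  obtain ⟨n, hn⟩ := (Real.cos_eq_one_iff t).mp h
  obtain ⟨h1, h2⟩ := ht
  have hpi : (0:ℝ) < 2*π := by positivity
  have hn0 : (0:ℝ) < n := by nlinarith
  have hn1 : (n:ℝ) < 1 := by nlinarith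
  have : (0:ℤ) < n := by exact_mod_cast hn0
  have : (n:ℤ) < 1 := by exact_mod_cast hn1
  omega

lemma besselI0_pos (x : ℝ) : 0 < besselI 0 x := by
  unfold besselI
  apply mul_pos (by positivity)
  apply intervalIntegral_pos_of_pos_on
  · exact (Continuous.intervalIntegrable (by continuity) _ _)
  · intro t _; positivity
  · positivity

lemma besselI1_lt (x : ℝ) : besselI 1 x < besselI 0 x := by
  unfold besselI
  have h : (0:ℝ) < 1 / (2*π) := by positivity
  rw [mul_lt_mul_iff_right₀ h]
  have hi : ∀ j : ℕ, IntervalIntegrable (fun θ => (Real.cos θ)^j * Real.exp (x * Real.cos θ)) volume 0 (2*π) :=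
    fun j => Continuous.intervalIntegrable (by continuity) _ _
  rw [← sub_pos, ← intervalIntegral.integral_sub (hi 0) (hi 1)]
  apply intervalIntegral_pos_of_pos_on
  · exact Continuous.intervalIntegrable (by continuity) _ _
  · intro t ht
    simp only [pow_zero, pow_one, one_mul]
    have := cos_lt_one_on ht
    have := Real.exp_pos (x * Real.cos t)
    nlinarith
  · positivity

lemma ibp (x : ℝ) : ∫ θ in (0:ℝ)..(2*π), Real.cos θ * Real.exp (x * Real.cos θ)
    = x * ∫ θ in (0:ℝ)..(2*π), (Real.sin θ)^2 * Real.exp (x * Real.cos θ) := by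
  have key : ∫ θ in (0:ℝ)..(2*π),
      (Real.cos θ * Real.exp (x * Real.cos θ) - x * ((Real.sin θ)^2 * Real.exp (x * Real.cos θ)))
      = (fun θ => Real.sin θ * Real.exp (x * Real.cos θ)) (2*π)
        - (fun θ => Real.sin θ * Real.exp (x * Real.cos θ)) 0 := by
    apply intervalIntegral.integral_eq_sub_of_hasDerivAt (f := fun θ => Real.sin θ * Real.exp (x * Real.cos θ)) (f' := fun t => Real.cos t * Real.exp (x * Real.cos t) - x * ((Real.sin t)^2 * Real.exp (x * Real.cos t)))
    · intro t _
      have h1 : HasDerivAt (fun θ => Real.sin θ) (Real.cos t) t := Real.hasDerivAt_sin t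
      have h2 : HasDerivAt (fun θ => Real.exp (x * Real.cos θ))
          (Real.exp (x * Real.cos t) * (x * (-Real.sin t))) t := by
        exact (Real.hasDerivAt_exp _).comp t (((Real.hasDerivAt_cos t).const_mul x))
      have := h1.mul h2
      exact this.congr_deriv (by ring)
    · exact Continuous.intervalIntegrable (by continuity) _ _
  simp only [Real.sin_zero, Real.sin_two_pi, zero_mul, sub_zero] at key
  have hi1 : IntervalIntegrable (fun θ => Real.cos θ * Real.exp (x * Real.cos θ)) volume 0 (2*π) :=
    Continuous.intervalIntegrable (by continuity) _ _
  have hi2 : IntervalIntegrable (fun θ => x * ((Real.sin θ)^2 * Real.exp (x * Real.cos θ))) volume 0 (2*π) :=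
    Continuous.intervalIntegrable (by continuity) _ _
  rw [intervalIntegral.integral_sub hi1 hi2, intervalIntegral.integral_const_mul] at key
  linarith


lemma besselI_continuous (j : ℕ) : Continuous (besselI j) := by
  unfold besselI
  apply Continuous.mul continuous_const
  apply intervalIntegral.continuous_parametric_intervalIntegral_of_continuous'
  apply Continuous.mul
  · exact (Real.continuous_cos.comp continuous_snd).pow j
  · exact Real.continuous_exp.comp ((continuous_fst).mul (Real.continuous_cos.comp continuous_snd))


lemma besselI1_lower {x : ℝ} (hx : 0 ≤ x) : x / 2 ≤ besselI 1 x := by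
  have hsin : ∫ θ in (0:ℝ)..(2*π), (Real.sin θ)^2 * (1 + x * Real.cos θ) = π := by
    have : ∀ θ : ℝ, (Real.sin θ)^2 * (1 + x * Real.cos θ)
        = (Real.sin θ)^2 + x * ((Real.sin θ)^2 * Real.cos θ) := fun θ => by ring
    simp_rw [this]
    rw [intervalIntegral.integral_add (Continuous.intervalIntegrable (by continuity) _ _)
      (Continuous.intervalIntegrable (by continuity) _ _),
      intervalIntegral.integral_const_mul, integral_sin_sq, integral_sin_sq_mul_cos]
    simp
  have hmono : ∫ θ in (0:ℝ)..(2*π), (Real.sin θ)^2 * (1 + x * Real.cos θ)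
      ≤ ∫ θ in (0:ℝ)..(2*π), (Real.sin θ)^2 * Real.exp (x * Real.cos θ) := by
    apply intervalIntegral.integral_mono_on (by positivity)
      (Continuous.intervalIntegrable (by continuity) _ _)
      (Continuous.intervalIntegrable (by continuity) _ _)
    intro t _
    have h1 : 1 + x * Real.cos t ≤ Real.exp (x * Real.cos t) := by
      linarith [Real.add_one_le_exp (x * Real.cos t)]
    nlinarith [sq_nonneg (Real.sin t)]
  unfold besselI
  have hpi : (0:ℝ) < π := Real.pi_pos
  have hibp := ibp x
  simp only [pow_one]
  rw [hibp]
  rw [hsin] at hmono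
  calc x/2 = (1/(2*π)) * (x * π) := by field_simp
    _ ≤ (1/(2*π)) * (x * ∫ θ in (0:ℝ)..(2*π), (Real.sin θ)^2 * Real.exp (x * Real.cos θ)) := by
        apply mul_le_mul_of_nonneg_left _ (by positivity)
        exact mul_le_mul_of_nonneg_left hmono hx


lemma shift_int (f : ℝ → ℝ) (hf : Continuous f) (hper : ∀ θ, f (θ + 2*π) = f θ) :
    ∫ θ in (0:ℝ)..(2*π), f θ = ∫ θ in (-π)..π, f θ := by
  have key : ∫ θ in (π:ℝ)..(2*π), f θ = ∫ θ in (-π)..(0:ℝ), f θ := by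
    have h := intervalIntegral.integral_comp_add_right (a := -π) (b := 0) (d := 2*π) f
    have e1 : -π + 2*π = π := by ring
    have e2 : (0:ℝ) + 2*π = 2*π := by ring
    rw [e1, e2] at h
    rw [← h]
    exact intervalIntegral.integral_congr (fun θ _ => (hper θ))
  have h1 := intervalIntegral.integral_add_adjacent_intervals (μ := volume)
    (Continuous.intervalIntegrable hf 0 π) (Continuous.intervalIntegrable hf π (2*π))
  have h2 := intervalIntegral.integral_add_adjacent_intervals (μ := volume)
    (Continuous.intervalIntegrable hf (-π) 0) (Continuous.intervalIntegrable hf 0 π)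
  linarith [h1, h2, key]

lemma symm_int (x : ℝ) :
    ∫ θ in (-π:ℝ)..π, Real.cos (2*θ) * Real.exp (x * Real.cos θ)
    = ∫ θ in (-π:ℝ)..π, Real.cos (2*θ) * Real.cosh (x * Real.cos θ) := by
  have hshift := shift_int (fun θ => Real.cos (2*θ) * Real.exp (x * Real.cos θ))
    (by continuity) (fun θ => by
      have h3 : Real.cos (2*(θ+2*π)) = Real.cos (2*θ) := by
        have e : 2*(θ+2*π) = 2*θ + 2*π + 2*π := by ring
        rw [e, Real.cos_add_two_pi, Real.cos_add_two_pi]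
      simp only [h3, Real.cos_add_two_pi])
  have h2 : ∀ θ : ℝ, Real.cos (2*(π - θ)) * Real.exp (x * Real.cos (π - θ))
      = Real.cos (2*θ) * Real.exp (-(x * Real.cos θ)) := by
    intro θ
    rw [Real.cos_pi_sub]
    have e : Real.cos (2*(π-θ)) = Real.cos (2*θ) := by
      have e2 : 2*(π-θ) = 2*π - 2*θ := by ring
      rw [e2, Real.cos_sub, Real.cos_two_pi, Real.sin_two_pi]
      ring
    rw [e]
    ring_nf
  have hrefl : ∫ θ in (-π:ℝ)..π, Real.cos (2*θ) * Real.exp (x * Real.cos θ)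
      = ∫ θ in (-π:ℝ)..π, Real.cos (2*θ) * Real.exp (-(x * Real.cos θ)) := by
    have h1 := intervalIntegral.integral_comp_sub_left (a := -π) (b := π)
      (fun θ => Real.cos (2*θ) * Real.exp (x * Real.cos θ)) π
    have e1 : π - π = (0:ℝ) := by ring
    have e2 : π - -π = 2*π := by ring
    rw [e1, e2] at h1
    calc ∫ θ in (-π:ℝ)..π, Real.cos (2*θ) * Real.exp (x * Real.cos θ)
        = ∫ θ in (0:ℝ)..(2*π), Real.cos (2*θ) * Real.exp (x * Real.cos θ) := hshift.symm
      _ = ∫ θ in (-π:ℝ)..π, Real.cos (2*(π-θ)) * Real.exp (x * Real.cos (π-θ)) := h1.symm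
      _ = ∫ θ in (-π:ℝ)..π, Real.cos (2*θ) * Real.exp (-(x * Real.cos θ)) :=
          intervalIntegral.integral_congr (fun θ _ => h2 θ)
  have hc : ∀ θ : ℝ, Real.cos (2*θ) * Real.cosh (x * Real.cos θ)
      = (Real.cos (2*θ) * Real.exp (x * Real.cos θ)
        + Real.cos (2*θ) * Real.exp (-(x * Real.cos θ))) / 2 := by
    intro θ
    rw [Real.cosh_eq]
    ring
  simp_rw [hc]
  rw [intervalIntegral.integral_div,
    intervalIntegral.integral_add (Continuous.intervalIntegrable (by continuity) _ _)
      (Continuous.intervalIntegrable (by continuity) _ _)]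
  linarith [hrefl]

lemma pointwise_nonneg {x : ℝ} (hx : 0 < x) (θ : ℝ) :
    0 ≤ Real.cos (2*θ) * (Real.cosh (x * Real.cos θ) - Real.cosh (x * (Real.sqrt 2 / 2))) := by
  set s : ℝ := Real.sqrt 2 / 2 with hs
  have hs2 : s^2 = 1/2 := by
    rw [hs, div_pow, Real.sq_sqrt (by norm_num : (2:ℝ) ≥ 0)]
    norm_num
  have hs0 : 0 < s := by rw [hs]; positivity
  set c : ℝ := Real.cos θ with hc
  rw [Real.cos_two_mul]
  have habs : |x * c| = x * |c| := by rw [abs_mul, abs_of_pos hx]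
  have habs2 : |x * s| = x * s := abs_of_pos (by positivity)
  rcases le_or_gt s |c| with h | h
  · apply mul_nonneg
    · nlinarith [sq_abs c, abs_nonneg c]
    · rw [sub_nonneg, Real.cosh_le_cosh, habs, habs2]
      exact mul_le_mul_of_nonneg_left h hx.le
  · have hA : 2 * c^2 - 1 ≤ 0 := by nlinarith [sq_abs c, abs_nonneg c]
    have hB : Real.cosh (x*c) - Real.cosh (x*s) ≤ 0 := by
      rw [sub_nonpos, Real.cosh_le_cosh, habs, habs2]
      exact mul_le_mul_of_nonneg_left h.le hx.le
    nlinarith [mul_nonneg (neg_nonneg.mpr hA) (neg_nonneg.mpr hB)]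

lemma pointwise_pos {x : ℝ} (hx : 0 < x) {θ : ℝ} (hθ : θ ∈ Set.Ioo 0 (π/4)) :
    0 < Real.cos (2*θ) * (Real.cosh (x * Real.cos θ) - Real.cosh (x * (Real.sqrt 2 / 2))) := by
  obtain ⟨h1, h2⟩ := hθ
  have hcos : Real.sqrt 2 / 2 < Real.cos θ := by
    rw [← Real.cos_pi_div_four]
    apply Real.cos_lt_cos_of_nonneg_of_le_pi h1.le (by linarith [Real.pi_pos]) h2
  have hs0 : (0:ℝ) < Real.sqrt 2 / 2 := by positivity
  have h2s : Real.sqrt 2 ^ 2 = 2 := Real.sq_sqrt (by norm_num)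
  apply mul_pos
  · rw [Real.cos_two_mul]; nlinarith
  · have hcp : (0:ℝ) < Real.cos θ := lt_trans hs0 hcos
    rw [sub_pos, Real.cosh_lt_cosh, abs_of_pos (mul_pos hx hcp), abs_of_pos (mul_pos hx hs0)]
    exact mul_lt_mul_of_pos_left hcos hx

lemma cos_two_int : ∫ θ in (-π:ℝ)..π, Real.cos (2*θ) = 0 := by
  rw [intervalIntegral.integral_comp_mul_left Real.cos (by norm_num : (2:ℝ) ≠ 0)]
  rw [integral_cos]
  simp [Real.sin_two_pi]

lemma A_pos {x : ℝ} (hx : 0 < x) :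
    0 < ∫ θ in (-π:ℝ)..π, Real.cos (2*θ) * Real.cosh (x * Real.cos θ) := by
  set K0 := Real.cosh (x * (Real.sqrt 2 / 2)) with hK0
  set g : ℝ → ℝ := fun θ => Real.cos (2*θ) * (Real.cosh (x * Real.cos θ) - K0) with hg
  have hgc : Continuous g := by rw [hg]; continuity
  have heq : ∫ θ in (-π:ℝ)..π, Real.cos (2*θ) * Real.cosh (x * Real.cos θ)
      = ∫ θ in (-π:ℝ)..π, g θ := by
    rw [hg]
    have : ∀ θ : ℝ, Real.cos (2*θ) * (Real.cosh (x * Real.cos θ) - K0)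
        = Real.cos (2*θ) * Real.cosh (x * Real.cos θ) - K0 * Real.cos (2*θ) := fun θ => by ring
    simp_rw [this]
    rw [intervalIntegral.integral_sub (Continuous.intervalIntegrable (by continuity) _ _)
      (Continuous.intervalIntegrable (by continuity) _ _),
      intervalIntegral.integral_const_mul, cos_two_int]
    ring
  rw [heq]
  have hpi := Real.pi_pos
  have i1 : 0 ≤ ∫ θ in (-π:ℝ)..(0:ℝ), g θ :=
    intervalIntegral.integral_nonneg (by linarith) (fun u _ => pointwise_nonneg hx u)
  have i2 : 0 < ∫ θ in (0:ℝ)..(π/4), g θ := by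
    apply intervalIntegral_pos_of_pos_on (Continuous.intervalIntegrable hgc _ _)
    · exact fun u hu => pointwise_pos hx hu
    · linarith
  have i3 : 0 ≤ ∫ θ in (π/4:ℝ)..π, g θ :=
    intervalIntegral.integral_nonneg (by linarith) (fun u _ => pointwise_nonneg hx u)
  have h1 := intervalIntegral.integral_add_adjacent_intervals (μ := volume)
    (Continuous.intervalIntegrable hgc (-π) 0) (Continuous.intervalIntegrable hgc 0 (π/4))
  have h2 := intervalIntegral.integral_add_adjacent_intervals (μ := volume)
    (Continuous.intervalIntegrable hgc (-π) (π/4)) (Continuous.intervalIntegrable hgc (π/4) π)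
  linarith

lemma besselI0_le {x : ℝ} (hx : 0 ≤ x) : besselI 0 x ≤ Real.exp x := by
  unfold besselI
  have hpi := Real.pi_pos
  have hmono : ∫ θ in (0:ℝ)..(2*π), (Real.cos θ)^0 * Real.exp (x * Real.cos θ)
      ≤ ∫ θ in (0:ℝ)..(2*π), Real.exp x := by
    apply intervalIntegral.integral_mono_on (by positivity)
      (Continuous.intervalIntegrable (by continuity) _ _)
      (Continuous.intervalIntegrable (by continuity) _ _)
    intro t _
    simp only [pow_zero, one_mul]
    apply Real.exp_le_exp.mpr
    nlinarith [Real.cos_le_one t, Real.neg_one_le_cos t]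
  rw [intervalIntegral.integral_const] at hmono
  simp only [smul_eq_mul, sub_zero] at hmono
  calc (1/(2*π)) * ∫ θ in (0:ℝ)..(2*π), (Real.cos θ)^0 * Real.exp (x * Real.cos θ)
      ≤ (1/(2*π)) * (2*π * Real.exp x) := by
        apply mul_le_mul_of_nonneg_left hmono (by positivity)
    _ = Real.exp x := by field_simp

lemma two_I1_lt {x : ℝ} (hx : 0 < x) : 2 * besselI 1 x < x * besselI 0 x := by
  have hpi := Real.pi_pos
  have hJ : 0 < ∫ θ in (0:ℝ)..(2*π), Real.cos (2*θ) * Real.exp (x * Real.cos θ) := by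
    rw [shift_int (fun θ => Real.cos (2*θ) * Real.exp (x * Real.cos θ))
      (by continuity) (fun θ => by
        have h3 : Real.cos (2*(θ+2*π)) = Real.cos (2*θ) := by
          have e : 2*(θ+2*π) = 2*θ + 2*π + 2*π := by ring
          rw [e, Real.cos_add_two_pi, Real.cos_add_two_pi]
        simp only [h3, Real.cos_add_two_pi]), symm_int x]
    exact A_pos hx
  have hsplit : ∀ θ : ℝ, Real.cos (2*θ) * Real.exp (x * Real.cos θ)
      = (Real.cos θ)^0 * Real.exp (x * Real.cos θ)
        - 2 * ((Real.sin θ)^2 * Real.exp (x * Real.cos θ)) := by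
    intro θ
    have h2 : Real.cos (2*θ) = 1 - 2*(Real.sin θ)^2 := by
      rw [Real.cos_two_mul]
      nlinarith [Real.sin_sq_add_cos_sq θ]
    rw [h2]
    ring
  simp_rw [hsplit] at hJ
  rw [intervalIntegral.integral_sub (Continuous.intervalIntegrable (by continuity) _ _)
      (Continuous.intervalIntegrable (by continuity) _ _),
    intervalIntegral.integral_const_mul, sub_pos] at hJ
  unfold besselI
  simp only [pow_one]
  rw [ibp x]
  calc 2 * ((1/(2*π)) * (x * ∫ θ in (0:ℝ)..(2*π), (Real.sin θ)^2 * Real.exp (x * Real.cos θ)))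
      = (x/(2*π)) * (2 * ∫ θ in (0:ℝ)..(2*π), (Real.sin θ)^2 * Real.exp (x * Real.cos θ)) := by
        ring
    _ < (x/(2*π)) * ∫ θ in (0:ℝ)..(2*π), (Real.cos θ)^0 * Real.exp (x * Real.cos θ) := by
        apply mul_lt_mul_of_pos_left hJ (by positivity)
    _ = x * ((1/(2*π)) * ∫ θ in (0:ℝ)..(2*π), (Real.cos θ)^0 * Real.exp (x * Real.cos θ)) := by
        ring

lemma Psi_continuous : Continuous Psi := by
  unfold Psi
  exact Continuous.div (besselI_continuous 1) (besselI_continuous 0)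
    (fun x => ne_of_gt (besselI0_pos x))

lemma Psi_lt_one (x : ℝ) : Psi x < 1 := by
  unfold Psi
  rw [div_lt_one (besselI0_pos x)]
  exact besselI1_lt x

/-- The fixed point equation `r = Ψ(2Kr)` has a strictly positive solution iff `K > 1`. -/
theorem fixed_point_positive_solution_iff (K : ℝ) (hK : 0 < K) :
    (∃ r : ℝ, 0 < r ∧ r = Psi (2 * K * r)) ↔ 1 < K := by
  constructor
  · rintro ⟨r, hr, hfix⟩
    by_contra hle
    push_neg at hle
    have hx : 0 < 2 * K * r := by positivity
    have h1 := two_I1_lt hx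
    have h0 := besselI0_pos (2 * K * r)
    have : Psi (2 * K * r) < K * r := by
      unfold Psi
      rw [div_lt_iff₀ h0]
      nlinarith
    nlinarith [hfix ▸ this]
  · intro hK1
    have hlog : 0 < Real.log K := Real.log_pos hK1
    set r₀ : ℝ := Real.log K / (4 * K) with hr₀def
    have hr₀ : 0 < r₀ := by positivity
    have hr₀lt : r₀ < 1 := by
      have := Real.log_le_sub_one_of_pos hK
      rw [hr₀def, div_lt_one (by positivity)]
      nlinarith
    set f : ℝ → ℝ := fun r => Psi (2 * K * r) - r with hf
    have hfc : Continuous f := by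
      apply Continuous.sub _ continuous_id
      exact Psi_continuous.comp (by continuity)
    have hfr₀ : 0 < f r₀ := by
      have hx₀ : 2 * K * r₀ = Real.log K / 2 := by
        rw [hr₀def]; field_simp; ring
      have hx₀pos : 0 < 2 * K * r₀ := by positivity
      have hI1 := besselI1_lower hx₀pos.le
      have hI0pos := besselI0_pos (2 * K * r₀)
      have hI0lt : besselI 0 (2 * K * r₀) < K := by
        calc besselI 0 (2 * K * r₀) ≤ Real.exp (2 * K * r₀) := besselI0_le hx₀pos.le
          _ < K := by
            rw [hx₀]
            have h := Real.exp_lt_exp.mpr (show Real.log K / 2 < Real.log K by linarith)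
            rwa [Real.exp_log hK] at h
      have key : r₀ < Psi (2 * K * r₀) := by
        unfold Psi
        rw [lt_div_iff₀ hI0pos]
        calc r₀ * besselI 0 (2 * K * r₀) < r₀ * K := by
              exact mul_lt_mul_of_pos_left hI0lt hr₀
          _ ≤ besselI 1 (2 * K * r₀) := by
              have : r₀ * K = (2 * K * r₀) / 2 := by ring
              rw [this]
              exact hI1
      simp only [hf]
      linarith
    have hf1 : f 1 < 0 := by
      simp only [hf]
      have := Psi_lt_one (2 * K * 1)
      linarith
    have hiv := intermediate_value_Icc' hr₀lt.le (hfc.continuousOn (s := Set.Icc r₀ 1))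
    have h0 : (0:ℝ) ∈ Set.Icc (f 1) (f r₀) := ⟨hf1.le, hfr₀.le⟩
    obtain ⟨r, hrmem, hr0⟩ := hiv h0
    refine ⟨r, lt_of_lt_of_le hr₀ hrmem.1, ?_⟩
    simp only [hf] at hr0
    linarith
end

section
/- With q(θ) = exp(2Kr cos θ)/(2π I₀(2Kr)) and u_p(θ) = cos(pθ), the weighted H_{−1,1/q} norm satisfies ‖u_p‖_{−1,1/q} = (√2 π I₀(2Kr))/p · (1 + ρ_p) where |ρ_p| decays faster than any power of 1/p. In particular ‖u_p‖²_{−1,1/q} = (1/p²)·∫_S (1 − cos(2pθ))/(2q(θ)) dθ and ∫_S 1/q = (2π I₀(2Kr))², while ∫_S cos(2pθ)/q(θ) dθ = O(1/√((2p)!)). -/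
open Real MeasureTheory

/-- The stationary density `q(θ) = exp(2Kr cos θ)/(2π I₀(2Kr))`. -/
noncomputable def q (K r θ : ℝ) : ℝ :=
  Real.exp (2 * K * r * Real.cos θ) / (2 * π * besselI 0 (2 * K * r))

section aux
open intervalIntegral


lemma int_cos_k (k : ℕ) (hk : 1 ≤ k) :
    (∫ θ in (0:ℝ)..(2 * π), Real.cos (k * θ)) = 0 := by
  have hk0 : (k:ℝ) ≠ 0 := Nat.cast_ne_zero.2 (by omega)
  rw [intervalIntegral.integral_comp_mul_left (fun x => Real.cos x) hk0]
  simp only [integral_cos, mul_zero, Real.sin_zero, sub_zero]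
  have : (k:ℝ) * (2 * π) = (2*k : ℕ) * π := by push_cast; ring
  rw [this, Real.sin_nat_mul_pi]
  simp

lemma orth : ∀ (n : ℕ), ∀ (k : ℕ), n < k →
    (∫ θ in (0:ℝ)..(2 * π), Real.cos (k * θ) * Real.cos θ ^ n) = 0 := by
  intro n
  induction n with
  | zero => intro k hk; simpa using int_cos_k k hk
  | succ n ih =>
    intro k hk
    have hk1 : 1 ≤ k := by omega
    have key : ∀ θ : ℝ, Real.cos (k * θ) * Real.cos θ ^ (n+1)
        = (Real.cos (((k+1:ℕ)) * θ) * Real.cos θ ^ n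
          + Real.cos (((k-1:ℕ)) * θ) * Real.cos θ ^ n) / 2 := by
      intro θ
      have h1 : ((k+1:ℕ):ℝ) * θ = k * θ + θ := by push_cast; ring
      have h2 : ((k-1:ℕ):ℝ) * θ = k * θ - θ := by
        have : ((k-1:ℕ):ℝ) = (k:ℝ) - 1 := by
          push_cast [Nat.cast_sub hk1]; ring
        rw [this]; ring
      rw [h1, h2, Real.cos_add, Real.cos_sub]
      ring
    simp only [key]
    rw [intervalIntegral.integral_div]
    have i1 : IntervalIntegrable (fun θ => Real.cos (((k+1:ℕ):ℝ) * θ) * Real.cos θ ^ n)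
        volume 0 (2*π) := (Continuous.intervalIntegrable (by continuity) _ _)
    have i2 : IntervalIntegrable (fun θ => Real.cos (((k-1:ℕ):ℝ) * θ) * Real.cos θ ^ n)
        volume 0 (2*π) := (Continuous.intervalIntegrable (by continuity) _ _)
    rw [intervalIntegral.integral_add i1 i2, ih (k+1) (by omega), ih (k-1) (by omega)]
    norm_num

lemma exp_taylor_bound (x : ℝ) (k : ℕ) :
    |Real.exp x - ∑ i ∈ Finset.range k, x ^ i / i.factorial|
      ≤ |x| ^ k * Real.exp |x| / k.factorial := by
  have hsum : ∀ y : ℝ, Summable (fun n => y ^ n / n.factorial : ℕ → ℝ) :=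
    fun y => Real.summable_pow_div_factorial y
  have hexp : Real.exp x = ∑' n : ℕ, x ^ n / n.factorial := by
    rw [Real.exp_eq_exp_ℝ, NormedSpace.exp_eq_tsum_div]
  have hsplit := Summable.sum_add_tsum_nat_add k (hsum x)
  rw [hexp, ← hsplit, add_sub_cancel_left]
  have hb : ∀ n : ℕ, |x| ^ (n + k) / ((n + k).factorial : ℝ)
      ≤ |x| ^ k / k.factorial * (|x| ^ n / n.factorial) := by
    intro n
    have hfac : (k.factorial * n.factorial : ℝ) ≤ ((n + k).factorial : ℝ) := by
      exact_mod_cast Nat.le_of_dvd (Nat.factorial_pos _)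
        (by simpa [add_comm] using Nat.factorial_mul_factorial_dvd_factorial_add k n)
    have h1 : |x| ^ (n + k) / ((n + k).factorial : ℝ)
        ≤ |x| ^ (n + k) / ((k.factorial * n.factorial : ℕ) : ℝ) := by
      apply div_le_div_of_nonneg_left (by positivity) (by positivity)
      · push_cast; exact hfac
    refine h1.trans (le_of_eq ?_)
    have hkf : ((k.factorial : ℕ) : ℝ) ≠ 0 := by positivity
    have hnf : ((n.factorial : ℕ) : ℝ) ≠ 0 := by positivity
    push_cast
    rw [pow_add]
    field_simp
  calc |∑' n : ℕ, x ^ (n + k) / (n + k).factorial|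
      ≤ ∑' n : ℕ, |x| ^ (n + k) / ((n + k).factorial : ℝ) := by
        simpa [Real.norm_eq_abs, abs_div, abs_pow] using
          norm_tsum_le_tsum_norm (f := fun n : ℕ => x ^ (n + k) / (n + k).factorial)
            (by simpa [Real.norm_eq_abs, abs_div, abs_pow] using
              ((summable_nat_add_iff k).2 (hsum x)).abs)
    _ ≤ ∑' n : ℕ, |x| ^ k / k.factorial * (|x| ^ n / n.factorial) := by
        apply Summable.tsum_le_tsum hb
        · exact (summable_nat_add_iff k).2 (hsum |x|)
        · exact (hsum |x|).mul_left _
    _ = |x| ^ k / k.factorial * ∑' n : ℕ, |x| ^ n / n.factorial := tsum_mul_left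
    _ = |x| ^ k * Real.exp |x| / k.factorial := by
        rw [Real.exp_eq_exp_ℝ, NormedSpace.exp_eq_tsum_div]
        ring

lemma fourier_coef_bound (a : ℝ) (k : ℕ) (hk : 1 ≤ k) :
    |∫ θ in (0:ℝ)..(2 * π), Real.cos (k * θ) * Real.exp (-(a * Real.cos θ))|
      ≤ 2 * π * (|a| ^ k * Real.exp |a| / k.factorial) := by
  set B : ℝ := |a| ^ k * Real.exp |a| / k.factorial with hB
  have hBnn : 0 ≤ B := by positivity
  set P : ℝ → ℝ := fun θ => ∑ i ∈ Finset.range k, (-(a * Real.cos θ)) ^ i / i.factorial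
    with hP
  have hPc : Continuous P := by
    apply continuous_finset_sum
    intro i _
    exact ((continuous_const.mul Real.continuous_cos).neg.pow i).div_const _
  have hsplit : ∀ θ : ℝ, Real.cos (k * θ) * Real.exp (-(a * Real.cos θ))
      = Real.cos (k * θ) * P θ
        + Real.cos (k * θ) * (Real.exp (-(a * Real.cos θ)) - P θ) := by
    intro θ; ring
  have i1 : IntervalIntegrable (fun θ => Real.cos ((k:ℝ) * θ) * P θ) volume 0 (2*π) :=
    (Continuous.intervalIntegrable (by fun_prop) _ _)
  have i2 : IntervalIntegrable
      (fun θ => Real.cos ((k:ℝ) * θ) * (Real.exp (-(a * Real.cos θ)) - P θ)) volume 0 (2*π) :=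
    (Continuous.intervalIntegrable (by fun_prop) _ _)
  rw [intervalIntegral.integral_congr (g := fun θ => Real.cos ((k:ℝ) * θ) * P θ
        + Real.cos ((k:ℝ) * θ) * (Real.exp (-(a * Real.cos θ)) - P θ))
      (fun θ _ => hsplit θ),
    intervalIntegral.integral_add i1 i2]
  have hPzero : (∫ θ in (0:ℝ)..(2 * π), Real.cos ((k:ℝ) * θ) * P θ) = 0 := by
    have : ∀ θ : ℝ, Real.cos ((k:ℝ) * θ) * P θ
        = ∑ i ∈ Finset.range k, ((-a) ^ i / i.factorial)
            * (Real.cos ((k:ℝ) * θ) * Real.cos θ ^ i) := by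
      intro θ
      rw [hP, Finset.mul_sum]
      apply Finset.sum_congr rfl
      intro i _
      rw [show -(a * Real.cos θ) = (-a) * Real.cos θ by ring, mul_pow]
      ring
    rw [intervalIntegral.integral_congr (fun θ _ => this θ),
      intervalIntegral.integral_finset_sum]
    · apply Finset.sum_eq_zero
      intro i hi
      rw [intervalIntegral.integral_const_mul, orth i k (Finset.mem_range.1 hi), mul_zero]
    · intro i _
      exact (Continuous.intervalIntegrable (by fun_prop) _ _)
  rw [hPzero, zero_add]
  have hRb : ∀ θ ∈ Set.uIoc (0:ℝ) (2*π),
      ‖Real.cos ((k:ℝ) * θ) * (Real.exp (-(a * Real.cos θ)) - P θ)‖ ≤ B := by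
    intro θ _
    rw [Real.norm_eq_abs, abs_mul]
    have h1 : |Real.cos ((k:ℝ) * θ)| ≤ 1 := Real.abs_cos_le_one _
    have h2 : |Real.exp (-(a * Real.cos θ)) - P θ| ≤ B := by
      have := exp_taylor_bound (-(a * Real.cos θ)) k
      refine this.trans ?_
      rw [hB]
      apply div_le_div_of_nonneg_right _ (by positivity)
      · apply mul_le_mul
        · apply pow_le_pow_left₀ (abs_nonneg _)
          rw [abs_neg, abs_mul]
          calc |a| * |Real.cos θ| ≤ |a| * 1 :=
              mul_le_mul_of_nonneg_left (Real.abs_cos_le_one θ) (abs_nonneg a)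
            _ = |a| := mul_one _
        · apply Real.exp_le_exp.2
          rw [abs_neg, abs_mul]
          calc |a| * |Real.cos θ| ≤ |a| * 1 :=
              mul_le_mul_of_nonneg_left (Real.abs_cos_le_one θ) (abs_nonneg a)
            _ = |a| := mul_one _
        · positivity
        · positivity
    calc |Real.cos ((k:ℝ) * θ)| * |Real.exp (-(a * Real.cos θ)) - P θ|
        ≤ 1 * B := mul_le_mul h1 h2 (abs_nonneg _) zero_le_one
      _ = B := one_mul _
  have := intervalIntegral.norm_integral_le_of_norm_le_const hRb
  rw [Real.norm_eq_abs] at this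
  refine this.trans ?_
  rw [sub_zero, abs_of_nonneg (by positivity : (0:ℝ) ≤ 2*π)]
  ring_nf
  exact le_refl _

lemma int_sin_exp (a : ℝ) (p : ℕ) :
    (∫ θ in (0:ℝ)..(2 * π), Real.sin (p * θ) * Real.exp (-(a * Real.cos θ))) = 0 := by
  have h := intervalIntegral.integral_comp_sub_left
    (fun θ => Real.sin (p * θ) * Real.exp (-(a * Real.cos θ))) (2 * π)
    (a := 0) (b := 2 * π)
  simp only [sub_self, sub_zero] at h
  have heq : ∀ θ : ℝ, Real.sin ((p:ℝ) * (2 * π - θ)) * Real.exp (-(a * Real.cos (2 * π - θ)))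
      = -(Real.sin ((p:ℝ) * θ) * Real.exp (-(a * Real.cos θ))) := by
    intro θ
    have h1 : (p:ℝ) * (2 * π - θ) = (p:ℝ) * (2 * π) - (p:ℝ) * θ := by ring
    have h2 : Real.cos (2 * π - θ) = Real.cos θ := by
      rw [Real.cos_sub, Real.cos_two_pi, Real.sin_two_pi]; ring
    rw [h1, Real.sin_nat_mul_two_pi_sub, h2]
    ring
  rw [intervalIntegral.integral_congr (fun θ _ => heq θ), intervalIntegral.integral_neg] at h
  linarith [h]

lemma int_exp_neg_cos (a : ℝ) :
    (∫ θ in (0:ℝ)..(2 * π), Real.exp (-(a * Real.cos θ)))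
      = ∫ θ in (0:ℝ)..(2 * π), Real.exp (a * Real.cos θ) := by
  have hper : Function.Periodic (fun θ : ℝ => Real.exp (a * Real.cos θ)) (2 * π) := by
    intro θ; simp [Real.cos_add_two_pi]
  have h1 : (∫ θ in (0:ℝ)..(2*π), Real.exp (a * Real.cos θ))
      = ∫ θ in (-π)..(-π + 2*π), Real.exp (a * Real.cos θ) := by
    have := hper.intervalIntegral_add_eq 0 (-π)
    simpa using this
  have h2 : (∫ θ in (-π)..(-π + 2*π), Real.exp (a * Real.cos θ))
      = ∫ θ in (-π)..(π), Real.exp (a * Real.cos θ) := by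
    congr 1
    ring
  have h3 := intervalIntegral.integral_comp_add_right
    (a := -π) (b := π) (fun θ => Real.exp (-(a * Real.cos θ))) π
  have heq : ∀ θ : ℝ, Real.exp (-(a * Real.cos (θ + π))) = Real.exp (a * Real.cos θ) := by
    intro θ
    rw [Real.cos_add_pi]
    ring_nf
  rw [intervalIntegral.integral_congr (fun θ _ => heq θ)] at h3
  have h4 : -π + π = (0:ℝ) := by ring
  have h5 : π + π = 2 * π := by ring
  rw [h4, h5] at h3
  rw [← h3, h1, h2]

lemma pow_le_sqrt_fact_mul (a : ℝ) (ha : 0 ≤ a) (m : ℕ) :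
    a ^ m ≤ Real.sqrt (Real.exp (a ^ 2)) * Real.sqrt (m.factorial : ℝ) := by
  have h1 : (a ^ 2) ^ m / (m.factorial : ℝ) ≤ Real.exp (a ^ 2) :=
    Real.pow_div_factorial_le_exp (x := a^2) (sq_nonneg a) m
  have h2 : (a ^ 2) ^ m ≤ Real.exp (a ^ 2) * (m.factorial : ℝ) := by
    rw [div_le_iff₀ (by positivity : (0:ℝ) < (m.factorial : ℝ))] at h1
    exact h1
  have h3 : a ^ m = Real.sqrt ((a ^ 2) ^ m) := by
    rw [show (a^2)^m = (a^m)^2 by ring, Real.sqrt_sq (by positivity)]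
  rw [h3, ← Real.sqrt_mul (Real.exp_nonneg _)]
  exact Real.sqrt_le_sqrt h2

lemma nat_pow_le_fact (n p : ℕ) : p ^ (2*n) ≤ (2*n)^(2*n) * (2*p).factorial := by
  by_cases hp : p ≤ 2*n
  · calc p ^ (2*n) ≤ (2*n)^(2*n) := Nat.pow_le_pow_left hp _
      _ ≤ (2*n)^(2*n) * (2*p).factorial := Nat.le_mul_of_pos_right _ (Nat.factorial_pos _)
  · push_neg at hp
    have key : (2*p - 2*n).factorial * (2*p - 2*n + 1)^(2*n) ≤ (2*p).factorial := by
      have := @Nat.factorial_mul_pow_le_factorial (2*p - 2*n) (2*n)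
      have he : 2*p - 2*n + 2*n = 2*p := by omega
      rwa [he] at this
    calc p ^ (2*n) ≤ (2*p - 2*n + 1)^(2*n) := Nat.pow_le_pow_left (by omega) _
      _ ≤ (2*p - 2*n).factorial * (2*p - 2*n + 1)^(2*n) :=
          Nat.le_mul_of_pos_left _ (Nat.factorial_pos _)
      _ ≤ (2*p).factorial := key
      _ ≤ (2*n)^(2*n) * (2*p).factorial := by
          apply Nat.le_mul_of_pos_left
          rcases Nat.eq_zero_or_pos n with h | h
          · simp [h]
          · positivity

lemma abs_sqrt_sub_sqrt (x y : ℝ) (hx : 0 ≤ x) (hy : 0 < y) :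
    |Real.sqrt x - Real.sqrt y| ≤ |x - y| / Real.sqrt y := by
  rw [le_div_iff₀ (Real.sqrt_pos.2 hy)]
  calc |Real.sqrt x - Real.sqrt y| * Real.sqrt y
      ≤ |Real.sqrt x - Real.sqrt y| * (Real.sqrt x + Real.sqrt y) := by
        apply mul_le_mul_of_nonneg_left _ (abs_nonneg _)
        · have := Real.sqrt_nonneg x; linarith
    _ = |x - y| := by
        rw [← abs_of_nonneg (by positivity : (0:ℝ) ≤ Real.sqrt x + Real.sqrt y), ← abs_mul]
        congr 1
        have h1 : Real.sqrt x ^ 2 = x := Real.sq_sqrt hx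
        have h2 : Real.sqrt y ^ 2 = y := Real.sq_sqrt hy.le
        nlinarith [h1, h2]

lemma q_div (K r x θ : ℝ) :
    x / q K r θ
      = x * ((2 * π * besselI 0 (2 * K * r)) * Real.exp (-(2 * K * r * Real.cos θ))) := by
  rw [q, Real.exp_neg, div_div_eq_mul_div]
  ring

end aux

/-- Weighted `H_{−1,1/q}` norm of `u_p = cos(p·)`: its centered primitive is
`sin(pθ)/p`, `‖u_p‖²_{−1,1/q} = (1/p²)∫ (1 − cos(2pθ))/(2q)`,
`∫ 1/q = (2π I₀(2Kr))²`, `∫ cos(2pθ)/q = O(1/√((2p)!))`, and hence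
`‖u_p‖_{−1,1/q} = (√2 π I₀(2Kr)/p)(1 + ρ_p)` with `ρ_p` decaying faster than any
power of `1/p`. -/
theorem cos_weighted_Hminus1_norm (K r : ℝ) (hK : 1 < K) (hr : 0 < r)
    (hfix : r = besselI 1 (2 * K * r) / besselI 0 (2 * K * r)) :
    (∀ p : ℕ, 1 ≤ p → (∫ θ in (0:ℝ)..(2 * π), Real.sin (p * θ) / q K r θ) = 0) ∧
    (∀ p : ℕ, 1 ≤ p →
      (∫ θ in (0:ℝ)..(2 * π), (Real.sin (p * θ) / p) ^ 2 / q K r θ)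
        = (1 / (p : ℝ) ^ 2)
            * ∫ θ in (0:ℝ)..(2 * π), (1 - Real.cos (2 * p * θ)) / (2 * q K r θ)) ∧
    ((∫ θ in (0:ℝ)..(2 * π), 1 / q K r θ) = (2 * π * besselI 0 (2 * K * r)) ^ 2) ∧
    (∃ C : ℝ, 0 < C ∧ ∀ p : ℕ, 1 ≤ p →
      |∫ θ in (0:ℝ)..(2 * π), Real.cos (2 * p * θ) / q K r θ|
        ≤ C / Real.sqrt (Nat.factorial (2 * p) : ℝ)) ∧
    (∃ ρ : ℕ → ℝ,
      (∀ n : ℕ, ∃ Cn : ℝ, 0 < Cn ∧ ∀ p : ℕ, 1 ≤ p → |ρ p| ≤ Cn / (p : ℝ) ^ n) ∧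
      ∀ p : ℕ, 1 ≤ p →
        Real.sqrt (∫ θ in (0:ℝ)..(2 * π), (Real.sin (p * θ) / p) ^ 2 / q K r θ)
          = (Real.sqrt 2 * π * besselI 0 (2 * K * r)) / p * (1 + ρ p)) := by
  have hπ : 0 < π := Real.pi_pos
  have hK0 : (0:ℝ) < K := lt_trans one_pos hK
  have ha : 0 < 2 * K * r := by positivity
  -- positivity of I₀
  have hI0 : 0 < besselI 0 (2 * K * r) := by
    rw [besselI]
    apply mul_pos (by positivity)
    apply intervalIntegral.intervalIntegral_pos_of_pos
    · exact Continuous.intervalIntegrable (by fun_prop) _ _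
    · intro x
      simp only [pow_zero, one_mul]
      positivity
    · positivity
  have hc : 0 < 2 * π * besselI 0 (2 * K * r) := by positivity
  -- ∫ exp(-(a cos θ)) = 2π I₀(a)
  have hexpint : (∫ θ in (0:ℝ)..(2 * π), Real.exp (-(2 * K * r * Real.cos θ)))
      = 2 * π * besselI 0 (2 * K * r) := by
    rw [int_exp_neg_cos, besselI]
    simp only [pow_zero, one_mul]
    rw [← mul_assoc]
    have : 2 * π * (1 / (2 * π)) = 1 := by field_simp
    rw [this, one_mul]
  -- Part 1
  have part1 : ∀ p : ℕ, 1 ≤ p →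
      (∫ θ in (0:ℝ)..(2 * π), Real.sin (p * θ) / q K r θ) = 0 := by
    intro p hp
    rw [intervalIntegral.integral_congr
      (g := fun θ => (2 * π * besselI 0 (2 * K * r))
        * (Real.sin ((p:ℝ) * θ) * Real.exp (-(2 * K * r * Real.cos θ))))
      (fun θ _ => by rw [q_div]; ring)]
    rw [intervalIntegral.integral_const_mul, int_sin_exp, mul_zero]
  -- Part 2
  have part2 : ∀ p : ℕ, 1 ≤ p →
      (∫ θ in (0:ℝ)..(2 * π), (Real.sin (p * θ) / p) ^ 2 / q K r θ)
        = (1 / (p : ℝ) ^ 2)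
            * ∫ θ in (0:ℝ)..(2 * π), (1 - Real.cos (2 * p * θ)) / (2 * q K r θ) := by
    intro p hp
    rw [← intervalIntegral.integral_const_mul]
    apply intervalIntegral.integral_congr
    intro θ _
    have hs : Real.sin ((p:ℝ) * θ) ^ 2 * 2 = 1 - Real.cos (2 * (p:ℝ) * θ) := by
      rw [Real.sin_sq, Real.cos_sq]
      rw [show 2 * ((p:ℝ) * θ) = 2 * (p:ℝ) * θ by ring]
      ring
    simp only [div_eq_mul_inv, mul_inv, div_pow]
    rw [show ((2:ℝ) * (p:ℝ) * θ) = 2 * (p:ℝ) * θ by ring]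
    linear_combination ((q K r θ)⁻¹ * (((p:ℝ)^2)⁻¹) / 2) * hs
  -- Part 3
  have part3 : (∫ θ in (0:ℝ)..(2 * π), 1 / q K r θ)
      = (2 * π * besselI 0 (2 * K * r)) ^ 2 := by
    rw [intervalIntegral.integral_congr
      (g := fun θ => (2 * π * besselI 0 (2 * K * r))
        * Real.exp (-(2 * K * r * Real.cos θ)))
      (fun θ _ => by rw [q_div]; ring)]
    rw [intervalIntegral.integral_const_mul, hexpint, sq]
  -- Part 4 (with explicit constant)
  set a : ℝ := 2 * K * r with ha_def
  set C : ℝ := (2 * π * besselI 0 a) * (2 * π) * Real.exp a * Real.sqrt (Real.exp (a ^ 2))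
    with hC_def
  have hCpos : 0 < C := by positivity
  have part4 : ∀ p : ℕ, 1 ≤ p →
      |∫ θ in (0:ℝ)..(2 * π), Real.cos (2 * p * θ) / q K r θ|
        ≤ C / Real.sqrt (Nat.factorial (2 * p) : ℝ) := by
    intro p hp
    have hrw : (∫ θ in (0:ℝ)..(2 * π), Real.cos (2 * p * θ) / q K r θ)
        = (2 * π * besselI 0 a)
          * ∫ θ in (0:ℝ)..(2 * π), Real.cos (((2*p : ℕ):ℝ) * θ)
              * Real.exp (-(a * Real.cos θ)) := by
      rw [← intervalIntegral.integral_const_mul]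
      apply intervalIntegral.integral_congr
      intro θ _
      dsimp only
      rw [q_div]
      push_cast
      ring
    rw [hrw, abs_mul, abs_of_pos hc]
    have hb := fourier_coef_bound a (2*p) (by omega)
    have hfacpos : (0:ℝ) < ((2*p).factorial : ℝ) := by exact_mod_cast (2*p).factorial_pos
    have hsq : (0:ℝ) < Real.sqrt ((2*p).factorial : ℝ) := Real.sqrt_pos.2 hfacpos
    have hpow : |a| ^ (2*p) ≤ Real.sqrt (Real.exp (a ^ 2)) * Real.sqrt ((2*p).factorial : ℝ) := by
      rw [abs_of_pos ha]
      exact pow_le_sqrt_fact_mul a ha.le (2*p)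
    have habs : |a| = a := abs_of_pos ha
    have key : 2 * π * (|a| ^ (2*p) * Real.exp |a| / ((2*p).factorial : ℝ))
        ≤ 2 * π * Real.exp a * Real.sqrt (Real.exp (a ^ 2))
            / Real.sqrt ((2*p).factorial : ℝ) := by
      rw [habs]
      rw [show 2 * π * (a ^ (2*p) * Real.exp a / ((2*p).factorial : ℝ))
          = (2 * π * (a ^ (2*p) * Real.exp a)) / ((2*p).factorial : ℝ) from by ring]
      rw [div_le_div_iff₀ hfacpos hsq]
      have hff : Real.sqrt ((2*p).factorial : ℝ) * Real.sqrt ((2*p).factorial : ℝ)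
          = ((2*p).factorial : ℝ) := Real.mul_self_sqrt hfacpos.le
      calc 2 * π * (a ^ (2*p) * Real.exp a) * Real.sqrt ((2*p).factorial : ℝ)
          ≤ 2 * π * (Real.sqrt (Real.exp (a ^ 2)) * Real.sqrt ((2*p).factorial : ℝ)
              * Real.exp a) * Real.sqrt ((2*p).factorial : ℝ) := by
            have h2 := hpow
            rw [habs] at h2
            gcongr
        _ = 2 * π * Real.exp a * Real.sqrt (Real.exp (a ^ 2)) * ((2*p).factorial : ℝ) := by
            rw [show 2 * π * (Real.sqrt (Real.exp (a ^ 2)) * Real.sqrt ((2*p).factorial : ℝ)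
                  * Real.exp a) * Real.sqrt ((2*p).factorial : ℝ)
                = 2 * π * Real.exp a * Real.sqrt (Real.exp (a ^ 2))
                  * (Real.sqrt ((2*p).factorial : ℝ) * Real.sqrt ((2*p).factorial : ℝ))
                from by ring, hff]

    calc (2 * π * besselI 0 a)
          * |∫ θ in (0:ℝ)..(2 * π), Real.cos (((2*p : ℕ):ℝ) * θ)
              * Real.exp (-(a * Real.cos θ))|
        ≤ (2 * π * besselI 0 a)
            * (2 * π * (|a| ^ (2*p) * Real.exp |a| / ((2*p).factorial : ℝ))) := by
          exact mul_le_mul_of_nonneg_left hb hc.le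
      _ ≤ (2 * π * besselI 0 a)
            * (2 * π * Real.exp a * Real.sqrt (Real.exp (a ^ 2))
                / Real.sqrt ((2*p).factorial : ℝ)) :=
          mul_le_mul_of_nonneg_left key hc.le
      _ = C / Real.sqrt ((2*p).factorial : ℝ) := by
          rw [hC_def]; ring
  refine ⟨part1, part2, part3, ⟨C, hCpos, part4⟩, ?_⟩
  -- Part 5
  set s : ℝ := Real.sqrt 2 * π * besselI 0 a with hs_def
  have hspos : 0 < s := by
    have : (0:ℝ) < Real.sqrt 2 := Real.sqrt_pos.2 (by norm_num)
    positivity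
  have hs_sq : s ^ 2 = (2 * π * besselI 0 a) ^ 2 / 2 := by
    rw [hs_def]
    have h2 : Real.sqrt 2 ^ 2 = 2 := Real.sq_sqrt (by norm_num)
    field_simp
    nlinarith [h2]
  set E : ℕ → ℝ := fun p => ∫ θ in (0:ℝ)..(2 * π), Real.cos (2 * p * θ) / q K r θ
    with hE_def
  -- splitting of the integral of (1 - cos(2pθ))/(2q)
  have hsplit : ∀ p : ℕ,
      (∫ θ in (0:ℝ)..(2 * π), (1 - Real.cos (2 * p * θ)) / (2 * q K r θ))
        = ((2 * π * besselI 0 a) ^ 2 - E p) / 2 := by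
    intro p
    have h1 : (fun θ : ℝ => (1 - Real.cos (2 * p * θ)) / (2 * q K r θ))
        = fun θ => (1/2) * (1 / q K r θ) - (1/2) * (Real.cos (2 * p * θ) / q K r θ) := by
      funext θ
      simp only [div_eq_mul_inv, mul_inv]
      ring
    have hq1 : (fun θ : ℝ => 1 / q K r θ)
        = fun θ => (2 * π * besselI 0 a) * Real.exp (-(a * Real.cos θ)) := by
      funext θ; rw [q_div]; ring
    have hq2 : (fun θ : ℝ => Real.cos (2 * p * θ) / q K r θ)
        = fun θ => (2 * π * besselI 0 a)
            * (Real.cos (2 * p * θ) * Real.exp (-(a * Real.cos θ))) := by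
      funext θ; rw [q_div]; ring
    have i1 : IntervalIntegrable (fun θ : ℝ => (1/2) * (1 / q K r θ)) volume 0 (2*π) := by
      have he : (fun θ : ℝ => (1/2) * (1 / q K r θ))
          = fun θ => (1/2) * ((2 * π * besselI 0 a) * Real.exp (-(a * Real.cos θ))) := by
        funext θ; rw [q_div]; ring
      rw [he]
      exact Continuous.intervalIntegrable (by fun_prop) _ _
    have i2 : IntervalIntegrable (fun θ : ℝ => (1/2) * (Real.cos (2 * p * θ) / q K r θ))
        volume 0 (2*π) := by
      have he : (fun θ : ℝ => (1/2) * (Real.cos (2 * p * θ) / q K r θ))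
          = fun θ => (1/2) * ((2 * π * besselI 0 a)
              * (Real.cos (2 * p * θ) * Real.exp (-(a * Real.cos θ)))) := by
        funext θ; rw [q_div]; ring
      rw [he]
      exact Continuous.intervalIntegrable (by fun_prop) _ _
    rw [h1, intervalIntegral.integral_sub i1 i2, intervalIntegral.integral_const_mul,
      intervalIntegral.integral_const_mul, part3, hE_def]
    ring
  have hqpos : ∀ θ : ℝ, 0 < q K r θ := by
    intro θ
    rw [q]
    positivity
  have hVnonneg : ∀ p : ℕ,
      0 ≤ ∫ θ in (0:ℝ)..(2 * π), (Real.sin (p * θ) / p) ^ 2 / q K r θ := by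
    intro p
    apply intervalIntegral.integral_nonneg (by positivity)
    intro θ _
    exact div_nonneg (sq_nonneg _) (hqpos θ).le
  have hWnonneg : ∀ p : ℕ, 1 ≤ p → 0 ≤ ((2 * π * besselI 0 a) ^ 2 - E p) / 2 := by
    intro p hp
    have h := part2 p hp
    rw [hsplit p] at h
    have hp0 : (0:ℝ) < (p:ℝ) ^ 2 := by
      have : (0:ℝ) < (p:ℝ) := by exact_mod_cast hp
      positivity
    have hth := hVnonneg p
    rw [h] at hth
    have h3 : ((2 * π * besselI 0 a) ^ 2 - E p) / 2
        = (p:ℝ) ^ 2 * (1 / (p:ℝ) ^ 2 * (((2 * π * besselI 0 a) ^ 2 - E p) / 2)) := by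
      field_simp
    rw [h3]
    exact mul_nonneg hp0.le hth
  -- define ρ
  refine ⟨fun p => Real.sqrt (((2 * π * besselI 0 a) ^ 2 - E p) / 2) / s - 1, ?_, ?_⟩
  · -- decay bound
    intro n
    refine ⟨C / (2 * s ^ 2) * ((2 * (n:ℝ)) ^ n + 1), by positivity, ?_⟩
    intro p hp
    set W : ℝ := ((2 * π * besselI 0 a) ^ 2 - E p) / 2 with hW_def
    have hW0 : 0 ≤ W := hWnonneg p hp
    have hEb : |E p| ≤ C / Real.sqrt ((2*p).factorial : ℝ) := part4 p hp
    have hWs : |W - s ^ 2| ≤ (C / Real.sqrt ((2*p).factorial : ℝ)) / 2 := by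
      rw [hW_def, hs_sq]
      rw [show ((2 * π * besselI 0 a) ^ 2 - E p) / 2 - (2 * π * besselI 0 a) ^ 2 / 2
          = -(E p) / 2 from by ring]
      rw [abs_div, abs_neg]
      simp only [abs_two]
      gcongr
    have hsq2 : Real.sqrt (s ^ 2) = s := Real.sqrt_sq hspos.le
    have h1 : |Real.sqrt W - s| ≤ |W - s ^ 2| / s := by
      have := abs_sqrt_sub_sqrt W (s ^ 2) hW0 (by positivity)
      rwa [hsq2] at this
    have hrho : |Real.sqrt W / s - 1| ≤ |W - s ^ 2| / s ^ 2 := by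
      rw [show Real.sqrt W / s - 1 = (Real.sqrt W - s) / s from by field_simp]
      rw [abs_div, abs_of_pos hspos]
      calc |Real.sqrt W - s| / s ≤ (|W - s ^ 2| / s) / s := by gcongr
        _ = |W - s ^ 2| / s ^ 2 := by rw [div_div, sq]
    have hchain : |Real.sqrt W / s - 1|
        ≤ (C / (2 * s ^ 2)) / Real.sqrt ((2*p).factorial : ℝ) := by
      refine hrho.trans ?_
      rw [div_le_div_iff₀ (by positivity) (by positivity)]
      have hss : Real.sqrt ((2*p).factorial : ℝ) ≠ 0 := by positivity
      have hsne : s ≠ 0 := ne_of_gt hspos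
      calc |W - s ^ 2| * Real.sqrt ((2*p).factorial : ℝ)
          ≤ (C / Real.sqrt ((2*p).factorial : ℝ)) / 2
              * Real.sqrt ((2*p).factorial : ℝ) :=
            mul_le_mul_of_nonneg_right hWs (by positivity)
        _ = C / 2 * (Real.sqrt ((2*p).factorial : ℝ) / Real.sqrt ((2*p).factorial : ℝ)) := by
            ring
        _ = C / 2 := by rw [div_self hss, mul_one]
        _ = C / (2 * s ^ 2) * s ^ 2 := by field_simp
    refine hchain.trans ?_
    -- now C/(2s²)/√((2p)!) ≤ C/(2s²)·((2n)^n+1)/pⁿ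
    have hppos : (0:ℝ) < (p:ℝ) := by exact_mod_cast hp
    have hkey : (p:ℝ) ^ n ≤ ((2 * (n:ℝ)) ^ n + 1) * Real.sqrt ((2*p).factorial : ℝ) := by
      have hnat := nat_pow_le_fact n p
      have hcast : ((p:ℝ) ^ n) ^ 2 ≤ ((2 * (n:ℝ)) ^ n) ^ 2 * ((2*p).factorial : ℝ) := by
        have : ((p ^ (2*n) : ℕ) : ℝ) ≤ (((2*n)^(2*n) * (2*p).factorial : ℕ) : ℝ) := by
          exact_mod_cast hnat
        push_cast at this
        calc ((p:ℝ) ^ n) ^ 2 = (p:ℝ) ^ (2*n) := by rw [← pow_mul]; ring_nf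
          _ ≤ (2 * (n:ℝ)) ^ (2*n) * ((2*p).factorial : ℝ) := this
          _ = ((2 * (n:ℝ)) ^ n) ^ 2 * ((2*p).factorial : ℝ) := by
              rw [← pow_mul]; ring_nf
      have h1 : (p:ℝ) ^ n = Real.sqrt (((p:ℝ) ^ n) ^ 2) := by
        rw [Real.sqrt_sq (by positivity)]
      rw [h1]
      calc Real.sqrt (((p:ℝ) ^ n) ^ 2)
          ≤ Real.sqrt (((2 * (n:ℝ)) ^ n) ^ 2 * ((2*p).factorial : ℝ)) :=
            Real.sqrt_le_sqrt hcast
        _ = Real.sqrt (((2 * (n:ℝ)) ^ n) ^ 2) * Real.sqrt ((2*p).factorial : ℝ) :=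
            Real.sqrt_mul (by positivity) _
        _ = |(2 * (n:ℝ)) ^ n| * Real.sqrt ((2*p).factorial : ℝ) := by
            rw [Real.sqrt_sq_eq_abs]
        _ ≤ ((2 * (n:ℝ)) ^ n + 1) * Real.sqrt ((2*p).factorial : ℝ) := by
            apply mul_le_mul_of_nonneg_right _ (Real.sqrt_nonneg _)
            rw [abs_of_nonneg (by positivity)]
            linarith
    rw [div_le_div_iff₀ (by positivity) (by positivity)]
    calc C / (2 * s ^ 2) * (p:ℝ) ^ n
        ≤ C / (2 * s ^ 2) * (((2 * (n:ℝ)) ^ n + 1) * Real.sqrt ((2*p).factorial : ℝ)) :=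
          mul_le_mul_of_nonneg_left hkey (by positivity)
      _ = C / (2 * s ^ 2) * ((2 * (n:ℝ)) ^ n + 1) * Real.sqrt ((2*p).factorial : ℝ) := by
          ring
  · -- the norm identity
    intro p hp
    have hppos : (0:ℝ) < (p:ℝ) := by exact_mod_cast hp
    have hV := part2 p hp
    rw [hsplit p] at hV
    set W : ℝ := ((2 * π * besselI 0 a) ^ 2 - E p) / 2 with hW_def
    have hW0 : 0 ≤ W := hWnonneg p hp
    rw [hV]
    rw [show (1 / (p:ℝ) ^ 2) * W = W / (p:ℝ) ^ 2 from by ring]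
    rw [Real.sqrt_div hW0, Real.sqrt_sq hppos.le]
    field_simp
    rw [show (2 ^ 2 * π ^ 2 * besselI 0 a ^ 2 - E p) / 2 = W from by rw [hW_def]; ring]
    ring
end

section
/- Suppose the spectrum of a nonpositive self-adjoint operator −L consists of eigenvalues λ_0 = 0 < λ_1 ≤ λ_2 ≤ … with λ_l ≥ l²/C for l ≥ 1. Then for all 0 ≤ s' < t' < t: Σ_{l=0}^∞ ∫_{s'}^{t'} e^{−2(t−u)λ_l} du ≤ C'·h₁(t'−s'), where h₁(u) = √u for u ∈ [0,1) and h₁(u) = u for u ≥ 1, and C' depends only on C. (The l = 0 term contributes t'−s'; the sum over l ≥ 1 of (C/l²)(1 − e^{−(t'−s')l²/C}) is bounded by (3+2C)√(t'−s') when t'−s' < 1 and by a constant when t'−s' ≥ 1.) -/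
open Real MeasureTheory

/-- `h₁(u) = √u` for `u ∈ [0,1)` and `h₁(u) = u` for `u ≥ 1`. -/
noncomputable def h1 (u : ℝ) : ℝ := if u < 1 then Real.sqrt u else u

lemma intA {s' t' t a : ℝ} (h1 : s' < t') (h2 : t' ≤ t) (ha : 0 < a) :
    ∫ u in s'..t', Real.exp (-2*(t-u)*a) ≤ min (t'-s') (1/(2*a)) := by
  have hc : (2*a) ≠ 0 := by positivity
  have key : (∫ u in s'..t', Real.exp (-2*(t-u)*a)) ≤ ∫ u in s'..t', Real.exp (2*a*(u-t')) := by
    apply intervalIntegral.integral_mono_on h1.le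
    · exact ((by fun_prop : Continuous fun u:ℝ => Real.exp (-2*(t-u)*a)).intervalIntegrable _ _)
    · exact ((by fun_prop : Continuous fun u:ℝ => Real.exp (2*a*(u-t'))).intervalIntegrable _ _)
    · intro u hu
      apply Real.exp_le_exp.2
      nlinarith [hu.2]
  have comp : (∫ u in s'..t', Real.exp (2*a*(u-t')))
      = (2*a)⁻¹ * (1 - Real.exp (-(2*a)*(t'-s'))) := by
    rw [intervalIntegral.integral_comp_sub_right (fun v => Real.exp (2*a*v)) t']
    rw [intervalIntegral.integral_comp_mul_left Real.exp hc]
    rw [integral_exp, smul_eq_mul]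
    ring_nf
    rw [Real.exp_zero]
    ring_nf
  rw [comp] at key
  refine key.trans (le_min ?_ ?_)
  · have := Real.add_one_le_exp (-(2*a)*(t'-s'))
    rw [inv_mul_le_iff₀ (by positivity)]
    nlinarith
  · have := Real.exp_pos (-(2*a)*(t'-s'))
    rw [one_div]
    have h2a : 0 < (2*a)⁻¹ := by positivity
    nlinarith

lemma tail_inv_sq {k : ℕ} (hk : k ≠ 0) : ∑' i:ℕ, (((i:ℝ)+k+1)^2)⁻¹ ≤ (k:ℝ)⁻¹ := by
  apply Real.tsum_le_of_sum_range_le (fun n => by positivity)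
  intro n
  have hcast : ∀ i : ℕ, ((i:ℝ)+k+1)^2 = (((k+1+i : ℕ):ℝ))^2 := by intro i; push_cast; ring
  calc ∑ i ∈ Finset.range n, (((i:ℝ)+k+1)^2)⁻¹
      = ∑ i ∈ Finset.range n, ((((k+1+i:ℕ)):ℝ)^2)⁻¹ := by
        refine Finset.sum_congr rfl fun i _ => by rw [hcast i]
    _ = ∑ i ∈ Finset.Ico (k+1) (k+1+n), (((i:ℕ):ℝ)^2)⁻¹ := by
        rw [Finset.sum_Ico_eq_sum_range]
        simp
    _ = ∑ i ∈ Finset.Ioc k (k+n), (((i:ℕ):ℝ)^2)⁻¹ := by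
        congr 1
        ext x
        simp only [Finset.mem_Ico, Finset.mem_Ioc]
        omega
    _ ≤ (k:ℝ)⁻¹ - ((k+n:ℕ):ℝ)⁻¹ := sum_Ioc_inv_sq_le_sub hk (Nat.le_add_right _ _)
    _ ≤ (k:ℝ)⁻¹ := by
        have : (0:ℝ) ≤ ((k+n:ℕ):ℝ)⁻¹ := by positivity
        linarith

/-- If `λ₀ = 0` and `λ_l ≥ l²/C` for `l ≥ 1` (`C > 1`), then for all
`0 ≤ s' < t' < t`, `Σ_l ∫_{s'}^{t'} e^{−2(t−u)λ_l} du ≤ C' h₁(t'−s')`, with `C'`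
depending only on `C`. -/
theorem heat_kernel_sum_bound (C : ℝ) (hC : 1 < C) :
    ∃ C' : ℝ, 0 < C' ∧
      ∀ lam : ℕ → ℝ, lam 0 = 0 → (∀ l : ℕ, 1 ≤ l → (l : ℝ) ^ 2 / C ≤ lam l) →
      ∀ s' t' t : ℝ, 0 ≤ s' → s' < t' → t' < t →
        (∑' l : ℕ, ∫ u in s'..t', Real.exp (-2 * (t - u) * lam l))
          ≤ C' * h1 (t' - s') := by
  have hC0 : 0 < C := by linarith
  refine ⟨3 + C, by linarith, ?_⟩
  intro lam hlam0 hlam s' t' t hs' hst htt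
  set δ := t' - s' with hδdef
  have hδ : 0 < δ := by simp only [hδdef]; linarith
  set f : ℕ → ℝ := fun l => ∫ u in s'..t', Real.exp (-2 * (t - u) * lam l) with hf
  have hnn : ∀ l, 0 ≤ f l := fun l =>
    intervalIntegral.integral_nonneg hst.le (fun u _ => (Real.exp_pos _).le)
  have h0 : f 0 = δ := by
    simp [hf, hlam0, intervalIntegral.integral_const, smul_eq_mul]
    exact hδdef.symm
  have hbound : ∀ l : ℕ, 1 ≤ l → f l ≤ min δ (C/(2*(l:ℝ)^2)) := by
    intro l hl
    have hl1 : (1:ℝ) ≤ (l:ℝ) := by exact_mod_cast hl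
    have hl2 : (0:ℝ) < (l:ℝ)^2 := by positivity
    have hlaml : 0 < lam l := lt_of_lt_of_le (by positivity) (hlam l hl)
    refine (intA hst htt.le hlaml).trans (min_le_min le_rfl ?_)
    rw [div_le_div_iff₀ (by positivity) (by positivity)]
    have h := hlam l hl
    rw [div_le_iff₀ hC0] at h
    nlinarith
  -- summable comparison
  have hsum_base : ∀ m : ℕ, Summable (fun i : ℕ => (((i:ℝ)+m+1)^2)⁻¹) := by
    intro m
    have h2 : Summable (fun n : ℕ => ((n:ℝ)^2)⁻¹) :=
      Real.summable_nat_pow_inv.mpr (by norm_num)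
    have := (summable_nat_add_iff (m+1)).2 h2
    refine this.congr fun i => ?_
    push_cast
    ring_nf
  set g : ℕ → ℝ := fun l => min δ (C/(2*((l:ℝ)+1)^2)) with hg
  have hgnn : ∀ l, 0 ≤ g l := fun l => le_min hδ.le (by positivity)
  have hsg : Summable g := by
    refine Summable.of_nonneg_of_le hgnn (fun l => min_le_right _ _) ?_
    have := (hsum_base 0).mul_left (C/2)
    refine this.congr fun i => ?_
    field_simp
    simp
  set G : ℕ → ℝ := fun l => if l = 0 then δ else min δ (C/(2*(l:ℝ)^2)) with hG
  have hGnn : ∀ l, 0 ≤ G l := by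
    intro l
    by_cases h : l = 0 <;> simp [hG, h, hδ.le, le_min hδ.le (by positivity : (0:ℝ) ≤ C/(2*(l:ℝ)^2))]
  have hGshift : ∀ l : ℕ, G (l+1) = g l := by
    intro l
    simp only [hG, hg, Nat.succ_ne_zero, if_false]
    push_cast
    ring_nf
  have hsG : Summable G := by
    rw [← summable_nat_add_iff 1]
    exact hsg.congr fun l => (hGshift l).symm
  have hfG : ∀ l, f l ≤ G l := by
    intro l
    match l with
    | 0 => rw [h0]; simp [hG]
    | (m+1) => exact (hbound (m+1) (Nat.le_add_left 1 m)).trans_eq (by simp [hG])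
  have hsf : Summable f := Summable.of_nonneg_of_le hnn hfG hsG
  have step1 : (∑' l, f l) ≤ δ + ∑' l, g l := by
    calc (∑' l, f l) ≤ ∑' l, G l := Summable.tsum_le_tsum hfG hsf hsG
      _ = G 0 + ∑' l, G (l+1) := Summable.tsum_eq_zero_add hsG
      _ = δ + ∑' l, g l := by
          rw [tsum_congr hGshift]; simp [hG]
  have main : ∀ k : ℕ, k ≠ 0 → (∑' l, g l) ≤ (k:ℝ)*δ + (C/2)*(k:ℝ)⁻¹ := by
    intro k hk
    rw [← hsg.sum_add_tsum_nat_add k]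
    have hfin : ∑ i ∈ Finset.range k, g i ≤ (k:ℝ)*δ := by
      calc ∑ i ∈ Finset.range k, g i ≤ ∑ _i ∈ Finset.range k, δ :=
            Finset.sum_le_sum fun i _ => min_le_left _ _
        _ = (k:ℝ)*δ := by simp [mul_comm]
    have htail : (∑' i, g (i+k)) ≤ (C/2)*(k:ℝ)⁻¹ := by
      have hle : ∀ i : ℕ, g (i+k) ≤ (C/2) * (((i:ℝ)+k+1)^2)⁻¹ := by
        intro i
        refine (min_le_right _ _).trans (le_of_eq ?_)
        push_cast
        rw [div_mul_eq_div_div, div_eq_mul_inv]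
      calc (∑' i, g (i+k)) ≤ ∑' (i : ℕ), (C/2) * (((i:ℝ)+k+1)^2)⁻¹ := by
            refine Summable.tsum_le_tsum hle ((summable_nat_add_iff k).2 hsg) ((hsum_base k).mul_left _)
        _ = (C/2) * ∑' (i : ℕ), (((i:ℝ)+k+1)^2)⁻¹ := tsum_mul_left
        _ ≤ (C/2)*(k:ℝ)⁻¹ := by
            have := tail_inv_sq (k := k) hk
            have hC2 : (0:ℝ) ≤ C/2 := by positivity
            exact mul_le_mul_of_nonneg_left this hC2
    exact add_le_add hfin htail
  by_cases hδ1 : δ < 1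
  · have hh1 : h1 δ = Real.sqrt δ := by simp [h1, hδ1]
    rw [hh1]
    have hsδ : 0 < Real.sqrt δ := Real.sqrt_pos.mpr hδ
    set x : ℝ := (Real.sqrt δ)⁻¹ with hx
    have hx0 : 0 < x := by positivity
    set k : ℕ := ⌈x⌉₊ with hk
    have hk0 : k ≠ 0 := by
      have : 0 < k := Nat.ceil_pos.mpr hx0
      omega
    have hkx : x ≤ (k:ℝ) := Nat.le_ceil x
    have hkx1 : (k:ℝ) ≤ x + 1 := (Nat.ceil_lt_add_one hx0.le).le
    have hmul : Real.sqrt δ * Real.sqrt δ = δ := Real.mul_self_sqrt hδ.le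
    have hs1 : Real.sqrt δ ≤ 1 := by
      rw [show (1:ℝ) = Real.sqrt 1 by simp]
      exact Real.sqrt_le_sqrt (by linarith)
    have hδs : δ ≤ Real.sqrt δ := by nlinarith
    have hxδ : x * δ = Real.sqrt δ := by
      rw [hx, inv_mul_eq_div, div_eq_iff hsδ.ne']
      exact hmul.symm
    have hkinv : (k:ℝ)⁻¹ ≤ Real.sqrt δ := by
      rw [show Real.sqrt δ = x⁻¹ by rw [hx, inv_inv]]
      exact inv_anti₀ hx0 hkx
    have hk0' : (0:ℝ) < (k:ℝ) := by positivity
    have := main k hk0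
    have hkδ : (k:ℝ)*δ ≤ Real.sqrt δ + δ := by nlinarith
    calc (∑' l, f l) ≤ δ + ((k:ℝ)*δ + (C/2)*(k:ℝ)⁻¹) := by linarith [step1]
      _ ≤ (3+C) * Real.sqrt δ := by nlinarith
  · have hh1 : h1 δ = δ := by simp [h1, hδ1]
    rw [hh1]
    push_neg at hδ1
    have := main 1 one_ne_zero
    simp only [Nat.cast_one, one_mul, inv_one, mul_one] at this
    calc (∑' l, f l) ≤ δ + (δ + C/2) := by linarith [step1]
      _ ≤ (3+C) * δ := by nlinarith
end

section
/- With λ_l ≥ l²/C for l ≥ 1 (C > 1), for all 0 ≤ s' < s < t: Σ_{l=1}^∞ (1 − e^{−λ_l (t−s')})²/λ_l ≤ C'·h₂(t−s'), where h₂(u) = √u for u ∈ [0,1) and h₂(u) = 1 for u ≥ 1, and C' depends only on C. -/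
open Real MeasureTheory

/-- `h₂(u) = √u` for `u ∈ [0,1)` and `h₂(u) = 1` for `u ≥ 1`. -/
noncomputable def h2 (u : ℝ) : ℝ := if u < 1 then Real.sqrt u else 1

lemma dk_term_le_tau {lam τ : ℝ} (hlam : 0 < lam) (hτ : 0 < τ) :
    (1 - Real.exp (-(lam * τ))) ^ 2 / lam ≤ τ := by
  have ha : 0 < lam * τ := mul_pos hlam hτ
  have h1 : Real.exp (-(lam * τ)) ≤ 1 := Real.exp_le_one_iff.2 (by linarith)
  have h2 : 1 - Real.exp (-(lam * τ)) ≤ lam * τ := by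
    have := Real.add_one_le_exp (-(lam * τ)); linarith
  have h3 : 0 ≤ Real.exp (-(lam * τ)) := Real.exp_nonneg _
  rw [div_le_iff₀ hlam]
  nlinarith [sq_nonneg (1 - Real.exp (-(lam * τ)))]

lemma dk_term_le_inv {lam τ : ℝ} (hlam : 0 < lam) (hτ : 0 < τ) :
    (1 - Real.exp (-(lam * τ))) ^ 2 / lam ≤ 1 / lam := by
  have ha : 0 < lam * τ := mul_pos hlam hτ
  have h1 : Real.exp (-(lam * τ)) ≤ 1 := Real.exp_le_one_iff.2 (by linarith)
  have h3 : 0 ≤ Real.exp (-(lam * τ)) := Real.exp_nonneg _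
  apply div_le_div₀ zero_le_one _ hlam le_rfl
  nlinarith

/-- Splitting bound: if `F 0 = 0`, `F l ≤ A` for `1 ≤ l ≤ N` and `F l ≤ C / l²` for `l > N`,
then any finite partial sum of `F` is at most `N * A + C / N`. -/
lemma dk_finset_sum_bound (C : ℝ) (hC : 0 < C) (N : ℕ) (hN : 1 ≤ N) (A : ℝ) (hA : 0 ≤ A)
    (F : ℕ → ℝ) (hF0 : F 0 = 0) (hhead : ∀ l, 1 ≤ l → l ≤ N → F l ≤ A)
    (htail : ∀ l : ℕ, N < l → F l ≤ C / (l : ℝ) ^ 2) (u : Finset ℕ) :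
    ∑ l ∈ u, F l ≤ N * A + C / N := by
  set G : ℕ → ℝ := fun l =>
    (if 1 ≤ l ∧ l ≤ N then A else 0) + (if N < l then C / (l : ℝ) ^ 2 else 0) with hG
  have hFG : ∀ l, F l ≤ G l := by
    intro l
    simp only [hG]
    rcases Nat.eq_zero_or_pos l with h0 | h1
    · subst h0; simp [hF0]
    rcases le_or_gt l N with hle | hgt
    · rw [if_pos ⟨h1, hle⟩, if_neg (not_lt.2 hle), add_zero]
      exact hhead l h1 hle
    · rw [if_neg (fun h => absurd hgt (not_lt.2 h.2)), if_pos hgt, zero_add]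
      exact htail l hgt
  calc ∑ l ∈ u, F l ≤ ∑ l ∈ u, G l := Finset.sum_le_sum fun l _ => hFG l
    _ = (∑ l ∈ u, if 1 ≤ l ∧ l ≤ N then A else 0)
        + ∑ l ∈ u, if N < l then C / (l : ℝ) ^ 2 else 0 := Finset.sum_add_distrib
    _ ≤ N * A + C / N := by
        gcongr
        · -- head part
          rw [← Finset.sum_filter]
          have hsub : u.filter (fun l => 1 ≤ l ∧ l ≤ N) ⊆ Finset.Icc 1 N := by
            intro l hl
            simp only [Finset.mem_filter] at hl
            exact Finset.mem_Icc.2 hl.2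
          calc ∑ _l ∈ u.filter (fun l => 1 ≤ l ∧ l ≤ N), A
              ≤ ∑ _l ∈ Finset.Icc 1 N, A :=
                Finset.sum_le_sum_of_subset_of_nonneg hsub (fun _ _ _ => hA)
            _ = (N : ℝ) * A := by
                rw [Finset.sum_const, Nat.card_Icc]
                simp [nsmul_eq_mul]
        · -- tail part
          rw [← Finset.sum_filter]
          set M : ℕ := max (N + 1) (u.sup id) with hM
          have hsub : u.filter (fun l => N < l) ⊆ Finset.Ioc N M := by
            intro l hl
            simp only [Finset.mem_filter] at hl
            refine Finset.mem_Ioc.2 ⟨hl.2, le_trans ?_ (le_max_right _ _)⟩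
            exact Finset.le_sup (f := id) hl.1
          have hterm : ∀ l ∈ Finset.Ioc N M, (0:ℝ) ≤ C / (l : ℝ) ^ 2 := by
            intro l hl
            have : 0 < l := lt_of_le_of_lt (Nat.zero_le N) (Finset.mem_Ioc.1 hl).1
            positivity
          calc ∑ l ∈ u.filter (fun l => N < l), C / (l : ℝ) ^ 2
              ≤ ∑ l ∈ Finset.Ioc N M, C / (l : ℝ) ^ 2 :=
                Finset.sum_le_sum_of_subset_of_nonneg hsub (fun l hl _ => hterm l hl)
            _ = C * ∑ l ∈ Finset.Ioc N M, ((l : ℝ) ^ 2)⁻¹ := by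
                rw [Finset.mul_sum]; apply Finset.sum_congr rfl; intro l _
                rw [div_eq_mul_inv]
            _ ≤ C * ((N : ℝ)⁻¹ - (M : ℝ)⁻¹) := by
                apply mul_le_mul_of_nonneg_left _ hC.le
                exact sum_Ioc_inv_sq_le_sub (by omega) (le_trans (Nat.le_succ N) (le_max_left _ _))
            _ ≤ C / N := by
                rw [div_eq_mul_inv]
                apply mul_le_mul_of_nonneg_left _ hC.le
                have : (0:ℝ) ≤ (M : ℝ)⁻¹ := by positivity
                linarith

/-- If `λ_l ≥ l²/C` for `l ≥ 1` (`C > 1`), then for all `0 ≤ s' < s < t`,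
`Σ_{l≥1} (1 − e^{−λ_l(t−s')})²/λ_l ≤ C' h₂(t−s')` with `C'` depending only on `C`. -/
theorem difference_kernel_sum_bound (C : ℝ) (hC : 1 < C) :
    ∃ C' : ℝ, 0 < C' ∧
      ∀ lam : ℕ → ℝ, (∀ l : ℕ, 1 ≤ l → (l : ℝ) ^ 2 / C ≤ lam l) →
      ∀ s' s t : ℝ, 0 ≤ s' → s' < s → s < t →
        (∑' l : ℕ, if l = 0 then 0
          else (1 - Real.exp (-(lam l * (t - s')))) ^ 2 / lam l)
          ≤ C' * h2 (t - s') := by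
  refine ⟨2 * C + 2, by linarith, ?_⟩
  intro lam hlam s' s t hs' hss hst
  set τ : ℝ := t - s' with hτdef
  have hτ : 0 < τ := by simp only [hτdef]; linarith
  have hC0 : 0 < C := by linarith
  -- positivity of eigenvalues and pointwise bounds
  have hlampos : ∀ l : ℕ, 1 ≤ l → 0 < lam l := by
    intro l hl
    have h1 : (1:ℝ) ≤ (l:ℝ) := by exact_mod_cast hl
    have : (0:ℝ) < (l : ℝ) ^ 2 / C := by positivity
    linarith [hlam l hl]
  set F : ℕ → ℝ := fun l =>
    if l = 0 then 0 else (1 - Real.exp (-(lam l * τ))) ^ 2 / lam l with hF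
  have hFtau : ∀ l : ℕ, 1 ≤ l → F l ≤ τ := by
    intro l hl
    simp only [hF, if_neg (by omega : l ≠ 0)]
    exact dk_term_le_tau (hlampos l hl) hτ
  have hFinv : ∀ l : ℕ, 1 ≤ l → F l ≤ C / (l : ℝ) ^ 2 := by
    intro l hl
    have h1 : (1:ℝ) ≤ (l:ℝ) := by exact_mod_cast hl
    have hl2 : (0:ℝ) < (l : ℝ) ^ 2 / C := by positivity
    simp only [hF, if_neg (by omega : l ≠ 0)]
    calc (1 - Real.exp (-(lam l * τ))) ^ 2 / lam l ≤ 1 / lam l :=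
          dk_term_le_inv (hlampos l hl) hτ
      _ ≤ 1 / ((l : ℝ) ^ 2 / C) := one_div_le_one_div_of_le hl2 (hlam l hl)
      _ = C / (l : ℝ) ^ 2 := one_div_div _ _
  have hh2 : 0 ≤ h2 τ := by
    unfold h2; split
    · exact Real.sqrt_nonneg _
    · norm_num
  apply tsum_le_of_sum_le'
  · positivity
  intro u
  rcases lt_or_ge τ 1 with hτ1 | hτ1
  · -- case τ < 1 : h2 τ = √τ
    have hsτ : 0 < Real.sqrt τ := Real.sqrt_pos.2 hτ
    have hsτ1 : Real.sqrt τ ≤ 1 := by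
      rw [show (1:ℝ) = Real.sqrt 1 from (Real.sqrt_one).symm]
      exact Real.sqrt_le_sqrt hτ1.le
    set N : ℕ := ⌈1 / Real.sqrt τ⌉₊ with hN
    have hN1 : 1 ≤ N := Nat.one_le_iff_ne_zero.2 (by
      simp only [hN, ne_eq, Nat.ceil_eq_zero, not_le]
      positivity)
    have hNle : (N : ℝ) < 1 / Real.sqrt τ + 1 := Nat.ceil_lt_add_one (by positivity)
    have hNge : 1 / Real.sqrt τ ≤ (N : ℝ) := Nat.le_ceil _
    have key := dk_finset_sum_bound C hC0 N hN1 τ hτ.le F (by simp [hF])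
      (fun l hl _ => hFtau l hl) (fun l hl => hFinv l (by omega)) u
    have hNτ : (N : ℝ) * τ ≤ 2 * Real.sqrt τ := by
      have hττ : τ = Real.sqrt τ * Real.sqrt τ := (Real.mul_self_sqrt hτ.le).symm
      have h1 : (N : ℝ) * τ ≤ (1 / Real.sqrt τ + 1) * τ :=
        mul_le_mul_of_nonneg_right hNle.le hτ.le
      have h2 : (1 / Real.sqrt τ) * τ = Real.sqrt τ := by
        rw [one_div, inv_mul_eq_div, div_eq_iff hsτ.ne']; exact hττ
      have h3 : τ ≤ Real.sqrt τ := by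
        nlinarith
      nlinarith
    have hCN : C / N ≤ C * Real.sqrt τ := by
      rw [div_eq_mul_inv]
      apply mul_le_mul_of_nonneg_left _ hC0.le
      have h4 : (N:ℝ)⁻¹ ≤ (1 / Real.sqrt τ)⁻¹ :=
        inv_anti₀ (by positivity) hNge
      rwa [one_div, inv_inv] at h4
    have hh2eq : h2 τ = Real.sqrt τ := by unfold h2; rw [if_pos hτ1]
    rw [hh2eq]
    calc ∑ l ∈ u, F l ≤ (N : ℝ) * τ + C / N := key
      _ ≤ 2 * Real.sqrt τ + C * Real.sqrt τ := add_le_add hNτ hCN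
      _ ≤ (2 * C + 2) * Real.sqrt τ := by nlinarith
  · -- case τ ≥ 1 : h2 τ = 1
    have key := dk_finset_sum_bound C hC0 1 le_rfl C hC0.le F (by simp [hF])
      (fun l hl hl' => by
        have := hFinv l hl
        have hll : l = 1 := le_antisymm hl' hl
        subst hll
        simpa using this)
      (fun l hl => hFinv l (by omega)) u
    have hh2eq : h2 τ = 1 := by unfold h2; rw [if_neg (not_lt.2 hτ1)]
    rw [hh2eq]
    calc ∑ l ∈ u, F l ≤ (1 : ℕ) * C + C / (1:ℕ) := key
      _ ≤ (2 * C + 2) * 1 := by push_cast; linarith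
end
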